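/- Let S be a monoid, let (T, F) be a torsion theory of S-acts, and let A be an S-act. If ρ is a largest Rees congruence on A all of whose non-singleton classes belong to T (that is, ρ is a Rees congruence with Σ_ρ ⊆ T, and every Rees congruence on A whose non-singleton classes all belong to T is contained in ρ), then the Rees factor A/ρ belongs to F. -/

import Mathlib

universe u

/-- A (left) `S`-act: a type equipped with a monoid action of `S`. -/
structure SAct (S : Type u) [Monoid S] where
  carrier : Type u
  [mulAction : MulAction S carrier]

attribute [instance] SAct.mulAction

namespace SAct

variable {S : Type u} [Monoid S]

/-- A homomorphism of `S`-acts. -/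
def IsHom (A B : SAct S) (f : A.carrier → B.carrier) : Prop :=
  ∀ (s : S) (a : A.carrier), f (s • a) = s • f a

/-- A homomorphism is trivial if its image has at most one element. -/
def IsTrivialHom {A B : SAct S} (f : A.carrier → B.carrier) : Prop :=
  (Set.range f).Subsingleton

/-- Two `S`-acts are isomorphic if there is a bijective homomorphism between them. -/
def AreIso (A B : SAct S) : Prop :=
  ∃ f : A.carrier → B.carrier, IsHom A B f ∧ Function.Bijective f

/-- A subset of an `S`-act is a subact if it is closed under the action. -/
def IsSubact (A : SAct S) (B : Set A.carrier) : Prop :=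
  ∀ (s : S), ∀ a ∈ B, s • a ∈ B

/-- The `S`-act induced on a subact. -/
def sub (A : SAct S) (B : Set A.carrier) (h : IsSubact A B) : SAct S where
  carrier := ↥B
  mulAction :=
    { smul := fun s b => ⟨s • (b : A.carrier), h s b b.2⟩
      one_smul := fun b => Subtype.ext (one_smul S (b : A.carrier))
      mul_smul := fun s t b => Subtype.ext (mul_smul s t (b : A.carrier)) }

/-- A congruence on an `S`-act: an equivalence relation compatible with the action. -/
def IsActCon (A : SAct S) (ρ : Setoid A.carrier) : Prop :=
  ∀ (s : S) (a a' : A.carrier), ρ a a' → ρ (s • a) (s • a')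

/-- The quotient `S`-act of an `S`-act by a congruence. -/
def quot (A : SAct S) (ρ : Setoid A.carrier) (h : IsActCon A ρ) : SAct S where
  carrier := Quotient ρ
  mulAction :=
    { smul := fun s => Quotient.map (fun a => s • a) (fun a b hab => h s a b hab)
      one_smul := fun q => Quotient.inductionOn q (fun a => by
        show Quotient.map (fun a => (1 : S) • a) _ (Quotient.mk ρ a) = Quotient.mk ρ a
        rw [Quotient.map_mk, one_smul])
      mul_smul := fun s t q => Quotient.inductionOn q (fun a => by
        show Quotient.map (fun a => (s * t) • a) _ (Quotient.mk ρ a)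
            = Quotient.map (fun a => s • a) _ (Quotient.map (fun a => t • a) _ (Quotient.mk ρ a))
        rw [Quotient.map_mk, Quotient.map_mk, Quotient.map_mk, mul_smul]) }

/-- A system of pairwise disjoint non-trivial subacts of an `S`-act. -/
def IsSystem (A : SAct S) (Sys : Set (Set A.carrier)) : Prop :=
  (∀ B ∈ Sys, IsSubact A B ∧ ¬ B.Subsingleton) ∧
    (∀ B ∈ Sys, ∀ C ∈ Sys, B ≠ C → ∀ a ∈ B, a ∉ C)

/-- The Rees congruence determined by a system of pairwise disjoint
non-trivial subacts: `a` and `b` are related iff `a = b` or `a` and `b`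
lie in a common member of the system. -/
def reesSetoid (A : SAct S) (Sys : Set (Set A.carrier)) (hSys : IsSystem A Sys) :
    Setoid A.carrier where
  r a b := a = b ∨ ∃ B ∈ Sys, a ∈ B ∧ b ∈ B
  iseqv :=
    { refl := fun _ => Or.inl rfl
      symm := by
        rintro a b (rfl | ⟨B, hB, ha, hb⟩)
        · exact Or.inl rfl
        · exact Or.inr ⟨B, hB, hb, ha⟩
      trans := by
        rintro a b c (rfl | ⟨B, hB, ha, hb⟩) h2
        · exact h2
        · rcases h2 with rfl | ⟨C, hC, hb', hc⟩
          · exact Or.inr ⟨B, hB, ha, hb⟩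
          · by_cases hBC : B = C
            · exact Or.inr ⟨B, hB, ha, hBC ▸ hc⟩
            · exact absurd hb' (hSys.2 B hB C hC hBC b hb) }

/-- A Rees congruence is a congruence. -/
theorem reesSetoid_isActCon (A : SAct S) (Sys : Set (Set A.carrier)) (hSys : IsSystem A Sys) :
    IsActCon A (reesSetoid A Sys hSys) := by
  rintro s a a' (rfl | ⟨B, hB, ha, ha'⟩)
  · exact Or.inl rfl
  · exact Or.inr ⟨B, hB, (hSys.1 B hB).1 s a ha, (hSys.1 B hB).1 s a' ha'⟩

/-- The system of non-singleton classes of a congruence (for a Rees congruence,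
this is its system `Σ_ρ` of non-trivial subacts). -/
def nsClasses (A : SAct S) (ρ : Setoid A.carrier) : Set (Set A.carrier) :=
  {C | (∃ a, C = {x | ρ x a}) ∧ ¬ C.Subsingleton}

/-- A congruence is a Rees congruence if it arises from a system of pairwise
disjoint non-trivial subacts. -/
def IsRees (A : SAct S) (ρ : Setoid A.carrier) : Prop :=
  ∃ (Sys : Set (Set A.carrier)) (hSys : IsSystem A Sys), ρ = reesSetoid A Sys hSys

end SAct

open SAct

/-- A (normal) Hoehnke radical: an assignment of a congruence `rad A` to every
`S`-act `A`, functorial with respect to homomorphisms, and with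
`rad (A / rad A) = Δ`. -/
structure HoehnkeRadical (S : Type u) [Monoid S] where
  rad : (A : SAct S) → Setoid A.carrier
  isCon : ∀ A : SAct S, IsActCon A (rad A)
  functorial : ∀ {A B : SAct S} (f : A.carrier → B.carrier), IsHom A B f →
    ∀ a a' : A.carrier, rad A a a' → rad B (f a) (f a')
  rad_quot : ∀ A : SAct S, rad (A.quot (rad A) (isCon A)) = ⊥

namespace HoehnkeRadical

variable {S : Type u} [Monoid S]

/-- The radical class `R_r = {A : r(A) = ∇_A}` of a Hoehnke radical. -/
def radClass (r : HoehnkeRadical S) : Set (SAct S) := {A | r.rad A = ⊤}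

/-- The semisimple class `S_r = {A : r(A) = Δ_A}` of a Hoehnke radical. -/
def ssClass (r : HoehnkeRadical S) : Set (SAct S) := {A | r.rad A = ⊥}

/-- The pointwise order on Hoehnke radicals. -/
def le (r r' : HoehnkeRadical S) : Prop := ∀ A : SAct S, r.rad A ≤ r'.rad A

end HoehnkeRadical

/-- A Kurosh-Amitsur radical: a Hoehnke radical such that (i) every `rad A` is a
Rees congruence, (ii) every member of `Σ_{rad A}` is in the radical class, and
(iii) every system of pairwise disjoint non-trivial subacts belonging to the
radical class is below `Σ_{rad A}`. -/
structure KARadical (S : Type u) [Monoid S] extends HoehnkeRadical S where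
  rees : ∀ A : SAct S, IsRees A (rad A)
  cls_rad : ∀ A : SAct S, ∀ B ∈ nsClasses A (rad A), ∀ h : IsSubact A B,
    A.sub B h ∈ toHoehnkeRadical.radClass
  maximal : ∀ (A : SAct S) (Sys : Set (Set A.carrier)), IsSystem A Sys →
    (∀ B ∈ Sys, ∀ h : IsSubact A B, A.sub B h ∈ toHoehnkeRadical.radClass) →
    ∀ B ∈ Sys, ∃ C ∈ nsClasses A (rad A), B ⊆ C

/-- A torsion theory: a pair `(T, F)` of classes of `S`-acts, each closed under
isomorphism and containing all trivial acts, such that (1) every homomorphism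
from a member of `T` to a member of `F` is trivial, (2) `T` contains every act
all of whose homomorphisms into members of `F` are trivial, and (3) `F`
contains every act all of whose homomorphisms from members of `T` are trivial. -/
structure IsTorsionTheory {S : Type u} [Monoid S] (T F : Set (SAct S)) : Prop where
  iso_T : ∀ A B : SAct S, AreIso A B → A ∈ T → B ∈ T
  iso_F : ∀ A B : SAct S, AreIso A B → A ∈ F → B ∈ F
  trivial_T : ∀ A : SAct S, Subsingleton A.carrier → A ∈ T
  trivial_F : ∀ A : SAct S, Subsingleton A.carrier → A ∈ F
  hom_trivial : ∀ A ∈ T, ∀ B ∈ F, ∀ f : A.carrier → B.carrier,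
    IsHom A B f → IsTrivialHom (A := A) (B := B) f
  mem_T : ∀ A : SAct S,
    (∀ B ∈ F, ∀ f : A.carrier → B.carrier, IsHom A B f → IsTrivialHom (A := A) (B := B) f) →
    A ∈ T
  mem_F : ∀ B : SAct S,
    (∀ A ∈ T, ∀ f : A.carrier → B.carrier, IsHom A B f → IsTrivialHom (A := A) (B := B) f) →
    B ∈ F

/-- The product of a family of `S`-acts. -/
def prodAct {S : Type u} [Monoid S] (ι : Type u) (f : ι → SAct S) : SAct S where
  carrier := ∀ i, (f i).carrier
  mulAction := inferInstance

/-- The Hoehnke radical `r_C` determined by a class `C` closed under subacts and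
products: the meet of all congruences whose quotient lies in `C`. -/
def radC {S : Type u} [Monoid S] (C : Set (SAct S)) (A : SAct S) : Setoid A.carrier :=
  sInf {χ : Setoid A.carrier | ∃ h : IsActCon A χ, A.quot χ h ∈ C}

/-- The radical class `R_{r_C}` of the Hoehnke radical `r_C`. -/
def RradC {S : Type u} [Monoid S] (C : Set (SAct S)) : Set (SAct S) :=
  {A | radC C A = ⊤}


namespace SAct

variable {S : Type u} [Monoid S]

theorem class_eq (A : SAct S) (Sys : Set (Set A.carrier)) (hSys : IsSystem A Sys)
    {C : Set A.carrier} (hC : C ∈ Sys) {a : A.carrier} (ha : a ∈ C) :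
    {x | (reesSetoid A Sys hSys).r x a} = C := by
  ext x
  constructor
  · rintro (rfl | ⟨C', hC', hx, ha'⟩)
    · exact ha
    · by_cases h : C' = C
      · exact h ▸ hx
      · exact absurd ha (hSys.2 C' hC' C hC h a ha')
  · intro hx
    exact Or.inr ⟨C, hC, hx, ha⟩

theorem mem_of_nsClasses (A : SAct S) (Sys : Set (Set A.carrier)) (hSys : IsSystem A Sys) :
    nsClasses A (reesSetoid A Sys hSys) ⊆ Sys := by
  rintro C ⟨⟨a, rfl⟩, hns⟩
  rw [Set.not_subsingleton_iff] at hns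
  obtain ⟨x, hx, y, hy, hxy⟩ := hns
  have key : ∃ C' ∈ Sys, a ∈ C' := by
    by_cases hxa : x = a
    · subst hxa
      rcases hy with h | ⟨C', hC', hy', ha'⟩
      · exact absurd h.symm hxy
      · exact ⟨C', hC', ha'⟩
    · rcases hx with h | ⟨C', hC', hx', ha'⟩
      · exact absurd h hxa
      · exact ⟨C', hC', ha'⟩
  obtain ⟨C', hC', haC'⟩ := key
  rw [class_eq A Sys hSys hC' haC']
  exact hC'

theorem nsClasses_of_mem (A : SAct S) (Sys : Set (Set A.carrier)) (hSys : IsSystem A Sys)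
    {C : Set A.carrier} (hC : C ∈ Sys) :
    C ∈ nsClasses A (reesSetoid A Sys hSys) := by
  have hns := (hSys.1 C hC).2
  obtain ⟨a, ha, -⟩ := Set.not_subsingleton_iff.mp hns
  exact ⟨⟨a, (class_eq A Sys hSys hC ha).symm⟩, hns⟩

end SAct

theorem largest_torsion_rees_factor_is_torsion_free (S : Type u) [Monoid S]
    (T F : Set (SAct S)) (htt : IsTorsionTheory T F)
    (A : SAct S) (ρ : Setoid A.carrier) (hrees : IsRees A ρ) (hc : IsActCon A ρ)
    (hcls : ∀ C ∈ nsClasses A ρ, ∀ h : IsSubact A C, A.sub C h ∈ T)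
    (hmax : ∀ ρ' : Setoid A.carrier, IsRees A ρ' →
      (∀ C ∈ nsClasses A ρ', ∀ h : IsSubact A C, A.sub C h ∈ T) → ρ' ≤ ρ) :
    A.quot ρ hc ∈ F := by
  classical
  obtain ⟨Sys, hSys, hρ⟩ := hrees
  subst hρ
  set ρ := reesSetoid A Sys hSys with hρdef
  apply htt.mem_F
  intro D hD f hf
  -- the preimage in `A` of the image of `f`
  set Bset : Set A.carrier := {a | (Quotient.mk ρ a : (A.quot ρ hc).carrier) ∈ Set.range f}
    with hBdef
  have hBsub : IsSubact A Bset := by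
    intro s a ha
    obtain ⟨d, hd⟩ := ha
    refine ⟨s • d, ?_⟩
    rw [hf s d, hd]
    rfl
  have hBunion : ∀ a ∈ Bset, ∀ b, ρ.r b a → b ∈ Bset := by
    intro a ha b hba
    have : (Quotient.mk ρ b : (A.quot ρ hc).carrier) = Quotient.mk ρ a := Quotient.sound hba
    show (Quotient.mk ρ b : (A.quot ρ hc).carrier) ∈ Set.range f
    rw [this]; exact ha
  have hCdich : ∀ C ∈ Sys, ∀ a ∈ C, a ∈ Bset → C ⊆ Bset := by
    intro C hC a haC haB x hxC
    exact hBunion a haB x (Or.inr ⟨C, hC, hxC, haC⟩)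
  -- the image of `f` is a subact of the quotient
  set Rng : Set (A.quot ρ hc).carrier := Set.range f with hRdef
  have hRsub : IsSubact (A.quot ρ hc) Rng := by
    rintro s q ⟨d, rfl⟩
    exact ⟨s • d, hf s d⟩
  -- the image of `f`, as an act, is torsion
  have hImT : (A.quot ρ hc).sub Rng hRsub ∈ T := by
    apply htt.mem_T
    intro E hE g hg
    set f' : D.carrier → ((A.quot ρ hc).sub Rng hRsub).carrier :=
      fun d => ⟨f d, d, rfl⟩ with hf'def
    have hf' : IsHom D ((A.quot ρ hc).sub Rng hRsub) f' := by
      intro s d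
      exact Subtype.ext (hf s d)
    have htriv := htt.hom_trivial D hD E hE (g ∘ f') (fun s d => by
      simp only [Function.comp_apply, hf' s d, hg s (f' d)])
    intro y₁ hy₁ y₂ hy₂
    obtain ⟨⟨q₁, d₁, hd₁⟩, rfl⟩ := hy₁
    obtain ⟨⟨q₂, d₂, hd₂⟩, rfl⟩ := hy₂
    have e₁ : (⟨q₁, d₁, hd₁⟩ : ↥Rng) = f' d₁ := Subtype.ext hd₁.symm
    have e₂ : (⟨q₂, d₂, hd₂⟩ : ↥Rng) = f' d₂ := Subtype.ext hd₂.symm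
    rw [e₁, e₂]
    exact htriv ⟨d₁, rfl⟩ ⟨d₂, rfl⟩
  -- `g` is constant on `ρ`-classes contained in `Bset`
  have gconst : ∀ (E : SAct S), E ∈ F →
      ∀ g : (A.sub Bset hBsub).carrier → E.carrier, IsHom (A.sub Bset hBsub) E g →
      ∀ a b : ↥Bset, ρ.r a.1 b.1 → g a = g b := by
    intro E hE g hg a b hab
    rcases hab with h | ⟨C, hC, haC, hbC⟩
    · exact congrArg g (Subtype.ext h)
    · have hCB : C ⊆ Bset := hCdich C hC a.1 haC a.2
      have hCsub := (hSys.1 C hC).1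
      set g2 : (A.sub C hCsub).carrier → E.carrier := fun x => g ⟨x.1, hCB x.2⟩ with hg2def
      have hg2 : IsHom (A.sub C hCsub) E g2 := by
        intro s x
        exact hg s ⟨x.1, hCB x.2⟩
      have hCT := hcls C (nsClasses_of_mem A Sys hSys hC) hCsub
      have htriv := htt.hom_trivial _ hCT E hE g2 hg2
      have e1 : g a = g2 ⟨a.1, haC⟩ := congrArg g (Subtype.ext rfl)
      have e2 : g b = g2 ⟨b.1, hbC⟩ := congrArg g (Subtype.ext rfl)
      rw [e1, e2]
      exact htriv ⟨⟨a.1, haC⟩, rfl⟩ ⟨⟨b.1, hbC⟩, rfl⟩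
  -- `Bset`, as an act, is torsion
  have hBT : A.sub Bset hBsub ∈ T := by
    apply htt.mem_T
    intro E hE g hg
    have hout : ∀ q : ↥Rng, Quotient.out q.1 ∈ Bset := by
      intro q
      show (Quotient.mk ρ (Quotient.out q.1) : (A.quot ρ hc).carrier) ∈ Set.range f
      rw [Quotient.out_eq q.1]
      exact q.2
    set gbar : ((A.quot ρ hc).sub Rng hRsub).carrier → E.carrier :=
      fun q => g ⟨Quotient.out q.1, hout q⟩ with hgbar
    have hgbarhom : IsHom ((A.quot ρ hc).sub Rng hRsub) E gbar := by
      intro s q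
      obtain ⟨q0, hq0⟩ := q
      obtain ⟨a, ha⟩ := Quotient.exists_rep q0
      subst ha
      have hq1 : (Quotient.mk ρ (s • a) : (A.quot ρ hc).carrier) ∈ Rng := hRsub s _ hq0
      have p1 : Quotient.out (Quotient.mk ρ (s • a)) ∈ Bset := hout ⟨_, hq1⟩
      have p0 : Quotient.out (Quotient.mk ρ a) ∈ Bset := hout ⟨_, hq0⟩
      have p2 : s • Quotient.out (Quotient.mk ρ a) ∈ Bset := hBsub s _ p0
      have hrel : ρ.r (Quotient.out (Quotient.mk ρ (s • a)))
          (s • Quotient.out (Quotient.mk ρ a)) := by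
        have h1 : ρ.r (Quotient.out (Quotient.mk ρ (s • a))) (s • a) :=
          Quotient.exact (Quotient.out_eq _)
        have h2 : ρ.r (s • Quotient.out (Quotient.mk ρ a)) (s • a) :=
          hc s _ _ (Quotient.exact (Quotient.out_eq _))
        exact Setoid.trans h1 (Setoid.symm h2)
      have e2 : g ⟨Quotient.out (Quotient.mk ρ (s • a)), p1⟩
          = g ⟨s • Quotient.out (Quotient.mk ρ a), p2⟩ :=
        gconst E hE g hg _ _ hrel
      show g ⟨Quotient.out (Quotient.mk ρ (s • a)), p1⟩
          = s • g ⟨Quotient.out (Quotient.mk ρ a), p0⟩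
      rw [e2]
      exact hg s ⟨Quotient.out (Quotient.mk ρ a), p0⟩
    have htriv := htt.hom_trivial _ hImT E hE gbar hgbarhom
    intro y₁ hy₁ y₂ hy₂
    obtain ⟨b₁, rfl⟩ := hy₁
    obtain ⟨b₂, rfl⟩ := hy₂
    have key : ∀ b : ↥Bset, g b = gbar ⟨Quotient.mk ρ b.1, b.2⟩ := by
      intro b
      apply gconst E hE g hg
      apply Quotient.exact (s := ρ)
      exact (Quotient.out_eq _).symm
    rw [key b₁, key b₂]
    exact htriv ⟨_, rfl⟩ ⟨_, rfl⟩
  -- key claim: any two elements of `Bset` are `ρ`-equivalent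
  have hkey : ∀ a₁ ∈ Bset, ∀ a₂ ∈ Bset,
      (Quotient.mk ρ a₁ : (A.quot ρ hc).carrier) = Quotient.mk ρ a₂ := by
    by_cases hBss : Bset.Subsingleton
    · intro a₁ h₁ a₂ h₂
      rw [hBss h₁ h₂]
    · set Sys' : Set (Set A.carrier) := insert Bset {C | C ∈ Sys ∧ ∀ a ∈ C, a ∉ Bset}
        with hSys'def
      have hSys' : IsSystem A Sys' := by
        constructor
        · rintro B (rfl | ⟨hB, -⟩)
          · exact ⟨hBsub, hBss⟩
          · exact hSys.1 B hB
        · rintro B (rfl | ⟨hB, hBdisj⟩) C (rfl | ⟨hC, hCdisj⟩) hne a haB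
          · exact absurd rfl hne
          · exact fun haC => hCdisj a haC haB
          · exact hBdisj a haB
          · exact hSys.2 B hB C hC hne a haB
      have hcls' : ∀ C ∈ nsClasses A (reesSetoid A Sys' hSys'), ∀ h : IsSubact A C,
          A.sub C h ∈ T := by
        intro C hC h
        rcases mem_of_nsClasses A Sys' hSys' hC with rfl | ⟨hCS, -⟩
        · exact hBT
        · exact hcls C (nsClasses_of_mem A Sys hSys hCS) h
      have hle := hmax (reesSetoid A Sys' hSys') ⟨Sys', hSys', rfl⟩ hcls'
      intro a₁ h₁ a₂ h₂
      apply Quotient.sound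
      exact hle (Or.inr ⟨Bset, Set.mem_insert _ _, h₁, h₂⟩)
  -- conclude
  intro q₁ hq₁ q₂ hq₂
  obtain ⟨d₁, rfl⟩ := hq₁
  obtain ⟨d₂, rfl⟩ := hq₂
  obtain ⟨a₁, ha₁⟩ := Quotient.exists_rep (f d₁)
  obtain ⟨a₂, ha₂⟩ := Quotient.exists_rep (f d₂)
  have hb₁ : a₁ ∈ Bset := by show _ ∈ Set.range f; rw [show Quotient.mk ρ a₁ = f d₁ from ha₁]; exact ⟨d₁, rfl⟩
  have hb₂ : a₂ ∈ Bset := by show _ ∈ Set.range f; rw [show Quotient.mk ρ a₂ = f d₂ from ha₂]; exact ⟨d₂, rfl⟩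
  exact (ha₁.symm.trans (hkey a₁ hb₁ a₂ hb₂)).trans ha₂
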